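/- For every n, with fresh variables z_c, z'_c for each 3-clause c ∈ π(n) over x1,…,xn and a fresh variable y, define ψ_n = ((¬y ∧ ⋀_{c∈π(n)}(c ∨ ¬z_c)) ∨ (y ∧ x1 ∧ ⋯ ∧ xn)) ∧ ⋀_{c∈π(n)}(z_c ↔ ¬z'_c). Then for every 3CNF formula φ = c1 ∧ ⋯ ∧ ck with clauses in π(n), φ is unsatisfiable if and only if M_φ = {y, x1,…,xn} ∪ {z_{c1},…,z_{ck}} ∪ {z'_c : c ∉ φ} is a minimal model of ψ_n. -/

import Mathlib

/-! ### Machine model: deterministic single-tape Turing machines,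
with explicit time and space usage. -/

structure STM (σ : Type) where
  Q : Type
  qFin : Fintype Q
  init : Q
  /-- Transition function: `none` means halt; otherwise
  (new state, written symbol (`none` = blank), move-right?). -/
  δ : Q → Option σ → Option (Q × Option σ × Bool)

namespace STM

variable {σ : Type}

structure Cfg (M : STM σ) where
  q : M.Q
  head : ℕ
  tape : ℕ → Option σ

def initCfg (M : STM σ) (x : List σ) : M.Cfg :=
  ⟨M.init, 0, fun i => x[i]?⟩

def step (M : STM σ) (c : M.Cfg) : Option M.Cfg :=
  (M.δ c.q (c.tape c.head)).map fun t =>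
    ⟨t.1, if t.2.2 then c.head + 1 else c.head - 1,
      fun i => if i = c.head then t.2.1 else c.tape i⟩

def step1 (M : STM σ) (c : M.Cfg) : M.Cfg := (M.step c).getD c

def run (M : STM σ) (n : ℕ) (c : M.Cfg) : M.Cfg := M.step1^[n] c

def Halted (M : STM σ) (c : M.Cfg) : Prop := M.step c = none

/-- The tape holds exactly the string `l`, followed by blanks. -/
def Represents (t : ℕ → Option σ) (l : List σ) : Prop := ∀ i, t i = l[i]?

/-- `M` computes `f` within time bound `T` (with respect to injections of the
input and output alphabets into the tape alphabet). -/
def ComputesInTime {α β : Type} (M : STM σ) (ια : α → σ) (ιβ : β → σ)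
    (f : List α → List β) (T : ℕ → ℕ) : Prop :=
  ∀ x : List α, ∃ n, n ≤ T x.length ∧
    M.Halted (M.run n (M.initCfg (x.map ια))) ∧
    Represents (M.run n (M.initCfg (x.map ια))).tape ((f x).map ιβ)

/-- `M` computes `f` within space bound `S`: the computation halts with the
correct output and the head never leaves the first `S |x|` cells. -/
def ComputesInSpace {α β : Type} (M : STM σ) (ια : α → σ) (ιβ : β → σ)
    (f : List α → List β) (S : ℕ → ℕ) : Prop :=
  ∀ x : List α, ∃ n,
    M.Halted (M.run n (M.initCfg (x.map ια))) ∧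
    Represents (M.run n (M.initCfg (x.map ια))).tape ((f x).map ιβ) ∧
    ∀ m, m ≤ n → (M.run m (M.initCfg (x.map ια))).head ≤ S x.length

end STM

/-- `f` is computable in polynomial time (by a deterministic Turing machine with
some finite tape alphabet). -/
def PolyTimeFun {α β : Type} (f : List α → List β) : Prop :=
  ∃ (σ : Type) (_ : Fintype σ) (ια : α → σ) (ιβ : β → σ) (M : STM σ) (p : Polynomial ℕ),
    Function.Injective ια ∧ Function.Injective ιβ ∧
    M.ComputesInTime ια ιβ f (fun n => p.eval n)

/-- `f` is computable in polynomial space. -/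
def PolySpaceFun {α β : Type} (f : List α → List β) : Prop :=
  ∃ (σ : Type) (_ : Fintype σ) (ια : α → σ) (ιβ : β → σ) (M : STM σ) (p : Polynomial ℕ),
    Function.Injective ια ∧ Function.Injective ιβ ∧
    M.ComputesInSpace ια ιβ f (fun n => p.eval n)

/-- Standard encoding of a pair of strings over a combined alphabet. -/
def encodePair {α β : Type} (x : List α) (y : List β) : List (α ⊕ β) :=
  x.map Sum.inl ++ y.map Sum.inr

/-- A two-argument function is polynomial-time computable if the corresponding
function on encoded pairs is. -/
def PolyTimeFun₂ {α β γ : Type} (g : List α → List β → List γ) : Prop :=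
  ∃ g' : List (α ⊕ β) → List γ, PolyTimeFun g' ∧ ∀ x y, g' (encodePair x y) = g x y

/-- A language is polynomial-time decidable. -/
def PolyTimeDecidable {α : Type} (L : Set (List α)) : Prop :=
  ∃ f : List α → List Bool, PolyTimeFun f ∧ ∀ x, x ∈ L ↔ f x = [true]

/-- `L` is in NP: membership has polynomial-size certificates verifiable in
polynomial time. -/
def InNP {α : Type} (L : Set (List α)) : Prop :=
  ∃ (p : Polynomial ℕ) (V : Set (List (α ⊕ Bool))), PolyTimeDecidable V ∧
    ∀ x, x ∈ L ↔ ∃ w : List Bool, w.length ≤ p.eval x.length ∧ encodePair x w ∈ V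

def InCoNP {α : Type} (L : Set (List α)) : Prop := InNP Lᶜ

/-- Polynomial-time many-one reducibility of languages. -/
def ManyOneRed {α β : Type} (L₁ : Set (List α)) (L₂ : Set (List β)) : Prop :=
  ∃ f : List α → List β, PolyTimeFun f ∧ ∀ x, x ∈ L₁ ↔ f x ∈ L₂

def NPComplete {α : Type} (L : Set (List α)) : Prop :=
  InNP L ∧ ∀ (β : Type) (L' : Set (List β)), InNP L' → ManyOneRed L' L

def CoNPComplete {α : Type} (L : Set (List α)) : Prop :=
  InCoNP L ∧ ∀ (β : Type) (L' : Set (List β)), InCoNP L' → ManyOneRed L' L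

def NPneqCoNP : Prop := ¬ ∀ (α : Type) (L : Set (List α)), InNP L ↔ InCoNP L

/-- `L` is in coNP/poly: a coNP predicate together with polynomial-size advice
depending only on the input length decides `L`. -/
def InCoNPpoly {α : Type} (L : Set (List α)) : Prop :=
  ∃ (p : Polynomial ℕ) (adv : ℕ → List Bool) (V : Set (List (α ⊕ Bool))),
    InCoNP V ∧ (∀ n, (adv n).length ≤ p.eval n) ∧
    ∀ x, x ∈ L ↔ encodePair x (adv x.length) ∈ V

def NPnotSubCoNPpoly : Prop := ¬ ∀ (α : Type) (L : Set (List α)), InNP L → InCoNPpoly L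

/-! ### Logic systems and model-equivalent reductions -/

/-- A logic system `(Γ, Δ, T, S, R)` (Definition 1): theories are strings over
`Γ`, interpretations are strings over `Δ`, and `R` is the satisfaction
relation. -/
structure LogicSystem (Γ Δ : Type) where
  T : Set (List Γ)
  S : Set (List Δ)
  R : List Γ → List Δ → Prop

namespace LogicSystem

variable {Γ Δ : Type}

/-- The set of `R`-models of a theory `t`. -/
def Mod (L : LogicSystem Γ Δ) (t : List Γ) : Set (List Δ) := {w | w ∈ L.S ∧ L.R t w}

/-- A poly-size system: `R t w` implies `|w| = p (|t|)` for a fixed polynomial. -/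
def PolySize (L : LogicSystem Γ Δ) : Prop :=
  ∃ p : Polynomial ℕ, ∀ t w, L.R t w → w.length = p.eval t.length

/-- The satisfaction relation `R`, as a language of encoded pairs. -/
def RelLang (L : LogicSystem Γ Δ) : Set (List (Γ ⊕ Δ)) :=
  {l | ∃ t w, l = encodePair t w ∧ L.R t w}

/-- The model-checking problem: given a theory `t ∈ T` and an interpretation
`w ∈ S`, does `w` satisfy `t`? -/
def ModelCheckLang (L : LogicSystem Γ Δ) : Set (List (Γ ⊕ Δ)) :=
  {l | ∃ t w, l = encodePair t w ∧ t ∈ L.T ∧ w ∈ L.S ∧ L.R t w}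

/-- The model-existence problem: `{t ∈ T : Mod_R(t) ≠ ∅}`. -/
def ModelExistLang (L : LogicSystem Γ Δ) : Set (List Γ) :=
  {t | t ∈ L.T ∧ (L.Mod t).Nonempty}

end LogicSystem

/-- Poly-time model-equivalent reduction (Definition 2): a poly-time translation
`f` of theories, and a poly-time map `g` such that `g t` is a bijection from the
models of `t` onto the models of `f t`. -/
def PtimeModelEquivRed {Γ₁ Δ₁ Γ₂ Δ₂ : Type}
    (L₁ : LogicSystem Γ₁ Δ₁) (L₂ : LogicSystem Γ₂ Δ₂) : Prop :=
  ∃ (f : List Γ₁ → List Γ₂) (g : List Γ₁ → List Δ₁ → List Δ₂),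
    PolyTimeFun f ∧ PolyTimeFun₂ g ∧
    ∀ t ∈ L₁.T, f t ∈ L₂.T ∧ Set.BijOn (g t) (L₁.Mod t) (L₂.Mod (f t))

/-- Poly-space model-equivalent reduction: as above, but `f` need only be
computable in polynomial space. -/
def PspaceModelEquivRed {Γ₁ Δ₁ Γ₂ Δ₂ : Type}
    (L₁ : LogicSystem Γ₁ Δ₁) (L₂ : LogicSystem Γ₂ Δ₂) : Prop :=
  ∃ (f : List Γ₁ → List Γ₂) (g : List Γ₁ → List Δ₁ → List Δ₂),
    PolySpaceFun f ∧ PolyTimeFun₂ g ∧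
    ∀ t ∈ L₁.T, f t ∈ L₂.T ∧ Set.BijOn (g t) (L₁.Mod t) (L₂.Mod (f t))

/-! ### Propositional formulas and existentially quantified propositional formulas -/

inductive PropForm where
  | tru : PropForm
  | fls : PropForm
  | var (n : ℕ) : PropForm
  | neg (φ : PropForm) : PropForm
  | and (φ ψ : PropForm) : PropForm
  | or (φ ψ : PropForm) : PropForm
  deriving DecidableEq

namespace PropForm

def eval (v : ℕ → Bool) : PropForm → Bool
  | tru => true
  | fls => false
  | var n => v n
  | neg φ => !(eval v φ)
  | and φ ψ => eval v φ && eval v ψ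
  | or φ ψ => eval v φ || eval v ψ

def vars : PropForm → Finset ℕ
  | tru => ∅
  | fls => ∅
  | var n => {n}
  | neg φ => vars φ
  | and φ ψ => vars φ ∪ vars ψ
  | or φ ψ => vars φ ∪ vars ψ

def iff (φ ψ : PropForm) : PropForm := or (and φ ψ) (and (neg φ) (neg ψ))

def conj : List PropForm → PropForm
  | [] => tru
  | φ :: l => and φ (conj l)

def disj : List PropForm → PropForm
  | [] => fls
  | φ :: l => or φ (disj l)

/-- A formula is satisfiable if some assignment makes it true. -/
def Satisfiable (φ : PropForm) : Prop := ∃ v : ℕ → Bool, φ.eval v = true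

/-- A model of `φ`, viewed as the set of variables assigned `true`. -/
def IsModel (φ : PropForm) (M : Finset ℕ) : Prop :=
  M ⊆ φ.vars ∧ φ.eval (fun i => decide (i ∈ M)) = true

/-- A minimal model: no proper subset is a model. -/
def IsMinModel (φ : PropForm) (M : Finset ℕ) : Prop :=
  φ.IsModel M ∧ ∀ M', M' ⊂ M → ¬ φ.IsModel M'

end PropForm

/-- An existentially quantified propositional formula `∃ bound, matrix`
(free variables allowed). -/
structure EPF where
  bound : Finset ℕ
  matrix : PropForm

namespace EPF

def free (Φ : EPF) : Finset ℕ := Φ.matrix.vars \ Φ.bound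

/-- Satisfaction of `Φ` by an assignment of its free variables. -/
def Sat (Φ : EPF) (v : ℕ → Bool) : Prop :=
  ∃ u : ℕ → Bool, (∀ i ∈ Φ.free, u i = v i) ∧ Φ.matrix.eval u = true

/-- A model of `Φ`: a subset of the free variables whose characteristic
assignment satisfies `Φ`. -/
def IsModel (Φ : EPF) (M : Finset ℕ) : Prop :=
  M ⊆ Φ.free ∧ Φ.Sat (fun i => decide (i ∈ M))

def IsMinModel (Φ : EPF) (M : Finset ℕ) : Prop :=
  Φ.IsModel M ∧ ∀ M', M' ⊂ M → ¬ Φ.IsModel M'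

end EPF

/-! ### String encodings of formulas, assignments, and the concrete systems -/

inductive PFAlpha where
  | x | bar | lnot | land | lor | exq | lp | rp | top | bot
  deriving DecidableEq

instance : Fintype PFAlpha :=
  ⟨{.x, .bar, .lnot, .land, .lor, .exq, .lp, .rp, .top, .bot}, fun a => by cases a <;> simp⟩

def encodeVar (n : ℕ) : List PFAlpha := PFAlpha.x :: List.replicate (n + 1) PFAlpha.bar

def PropForm.encode : PropForm → List PFAlpha
  | .tru => [.top]
  | .fls => [.bot]
  | .var n => encodeVar n
  | .neg φ => .lnot :: φ.encode
  | .and φ ψ => .lp :: (φ.encode ++ .land :: (ψ.encode ++ [.rp]))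
  | .or φ ψ => .lp :: (φ.encode ++ .lor :: (ψ.encode ++ [.rp]))

def EPF.encode (Φ : EPF) : List PFAlpha :=
  ((Φ.bound.sort (· ≤ ·)).map fun i => PFAlpha.exq :: encodeVar i).flatten ++ Φ.matrix.encode

/-- Decode a `{0,1}`-string as a subset of a (sorted) finite set of variables. -/
def decodeM (F : Finset ℕ) (w : List Bool) : Finset ℕ :=
  ((((F.sort (· ≤ ·)).zip w).filter fun p => p.2).map fun p => p.1).toFinset

def SatRel (t : List PFAlpha) (w : List Bool) : Prop :=
  ∃ φ : PropForm, t = φ.encode ∧ w.length = φ.vars.card ∧ φ.IsModel (decodeM φ.vars w)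

def MinSatRel (t : List PFAlpha) (w : List Bool) : Prop :=
  ∃ φ : PropForm, t = φ.encode ∧ w.length = φ.vars.card ∧ φ.IsMinModel (decodeM φ.vars w)

def FSatRel (t : List PFAlpha) (w : List Bool) : Prop :=
  ∃ Φ : EPF, t = Φ.encode ∧ w.length = Φ.free.card ∧ Φ.IsModel (decodeM Φ.free w)

def FMinSatRel (t : List PFAlpha) (w : List Bool) : Prop :=
  ∃ Φ : EPF, t = Φ.encode ∧ w.length = Φ.free.card ∧ Φ.IsMinModel (decodeM Φ.free w)

/-- The system (PF, TA, Sat). -/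
def SysSat : LogicSystem PFAlpha Bool :=
  ⟨{t | ∃ φ : PropForm, t = φ.encode}, Set.univ, SatRel⟩

/-- The system (PF, TA, MinSat). -/
def SysMinSat : LogicSystem PFAlpha Bool :=
  ⟨{t | ∃ φ : PropForm, t = φ.encode}, Set.univ, MinSatRel⟩

/-- The system (∃PF, TA, FSat). -/
def SysFSat : LogicSystem PFAlpha Bool :=
  ⟨{t | ∃ Φ : EPF, t = Φ.encode}, Set.univ, FSatRel⟩

/-- The system (∃PF, TA, FMinSat). -/
def SysFMinSat : LogicSystem PFAlpha Bool :=
  ⟨{t | ∃ Φ : EPF, t = Φ.encode}, Set.univ, FMinSatRel⟩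

/-! ### 3-clauses over variables `x₁,…,xₙ`, the formulas `Ψₙ` and `ψₙ` -/

/-- A 3-clause over `n` variables: up to three literals. -/
def Cl (n : ℕ) : Type := Fin 3 → Option (Fin n × Bool)

instance (n : ℕ) : Fintype (Cl n) := inferInstanceAs (Fintype (Fin 3 → Option (Fin n × Bool)))
instance (n : ℕ) : DecidableEq (Cl n) := inferInstanceAs (DecidableEq (Fin 3 → Option (Fin n × Bool)))

def litForm {n : ℕ} (l : Fin n × Bool) : PropForm :=
  if l.2 then .var l.1.1 else .neg (.var l.1.1)

/-- The 3-clause `c` as a propositional formula (a disjunction of literals). -/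
def clauseForm {n : ℕ} (c : Cl n) : PropForm :=
  PropForm.disj (((List.finRange 3).filterMap c).map litForm)

/-- The list of all 3-clauses over `n` variables (the set `π(n)`). -/
noncomputable def clList (n : ℕ) : List (Cl n) := (Finset.univ : Finset (Cl n)).toList

/-- An index for each 3-clause. -/
noncomputable def clIdx {n : ℕ} (c : Cl n) : ℕ := (Fintype.equivFin (Cl n) c : ℕ)

/-- The variable `z_c`. -/
noncomputable def zIdx (n : ℕ) (c : Cl n) : ℕ := n + clIdx c

/-- The variable `z'_c`. -/
noncomputable def z'Idx (n : ℕ) (c : Cl n) : ℕ := n + Fintype.card (Cl n) + clIdx c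

/-- The variable `y`. -/
def yIdx (n : ℕ) : ℕ := n + 2 * Fintype.card (Cl n)

/-- `Ψₙ = ∃x₁⋯∃xₙ ⋀_{c ∈ π(n)} (c ∨ ¬z_c)`. -/
noncomputable def Psi (n : ℕ) : EPF :=
  ⟨Finset.range n,
    PropForm.conj ((clList n).map fun c =>
      .or (clauseForm c) (.neg (.var (zIdx n c))))⟩

/-- A 3CNF formula `c₁ ∧ ⋯ ∧ c_k` with clauses from `π(n)`. -/
def phiForm {n : ℕ} (cs : List (Cl n)) : PropForm := PropForm.conj (cs.map clauseForm)

/-- The assignment `M_φ = {z_{c₁},…,z_{c_k}}` for `φ = c₁ ∧ ⋯ ∧ c_k`. -/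
noncomputable def Mphi {n : ℕ} (cs : List (Cl n)) : Finset ℕ :=
  Finset.image (zIdx n) cs.toFinset

/-- `ψₙ = ((¬y ∧ ⋀_{c}(c ∨ ¬z_c)) ∨ (y ∧ x₁ ∧ ⋯ ∧ xₙ)) ∧ ⋀_c (z_c ↔ ¬z'_c)`. -/
noncomputable def psi (n : ℕ) : PropForm :=
  .and
    (.or
      (.and (.neg (.var (yIdx n)))
        (PropForm.conj ((clList n).map fun c =>
          .or (clauseForm c) (.neg (.var (zIdx n c))))))
      (.and (.var (yIdx n)) (PropForm.conj ((List.range n).map PropForm.var))))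
    (PropForm.conj ((clList n).map fun c =>
      PropForm.iff (.var (zIdx n c)) (.neg (.var (z'Idx n c)))))

/-- `M_φ = {y, x₁,…,xₙ} ∪ {z_c : c ∈ φ} ∪ {z'_c : c ∉ φ}`. -/
noncomputable def Mphi' {n : ℕ} (cs : List (Cl n)) : Finset ℕ :=
  insert (yIdx n)
    (Finset.range n ∪ Finset.image (zIdx n) cs.toFinset ∪
      Finset.image (z'Idx n) (Finset.univ \ cs.toFinset))

namespace PropForm

lemma eval_conj (v : ℕ → Bool) (l : List PropForm) :
    (conj l).eval v = true ↔ ∀ φ ∈ l, φ.eval v = true := by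
  induction l with
  | nil => simp [conj, eval]
  | cons a l ih => simp [conj, eval, ih]

lemma eval_disj (v : ℕ → Bool) (l : List PropForm) :
    (disj l).eval v = true ↔ ∃ φ ∈ l, φ.eval v = true := by
  induction l with
  | nil => simp [disj, eval]
  | cons a l ih => simp [disj, eval, ih]

lemma mem_vars_conj {x : ℕ} (l : List PropForm) :
    x ∈ (conj l).vars ↔ ∃ φ ∈ l, x ∈ φ.vars := by
  induction l with
  | nil => simp [conj, vars]
  | cons a l ih => simp [conj, vars, ih]

lemma mem_vars_disj {x : ℕ} (l : List PropForm) :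
    x ∈ (disj l).vars ↔ ∃ φ ∈ l, x ∈ φ.vars := by
  induction l with
  | nil => simp [disj, vars]
  | cons a l ih => simp [disj, vars, ih]

lemma eval_iff (v : ℕ → Bool) (φ ψ : PropForm) :
    (PropForm.iff φ ψ).eval v = true ↔ φ.eval v = ψ.eval v := by
  simp only [PropForm.iff, eval]
  cases h1 : φ.eval v <;> cases h2 : ψ.eval v <;> simp

lemma eval_congr {u v : ℕ → Bool} (φ : PropForm) (h : ∀ i ∈ φ.vars, u i = v i) :
    φ.eval u = φ.eval v := by
  induction φ with
  | tru => rfl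
  | fls => rfl
  | var m => exact h m (by simp [vars])
  | neg φ ih =>
      simp only [eval]; rw [ih (fun i hi => h i (by simpa [vars] using hi))]
  | and φ ψ ih1 ih2 =>
      simp only [eval]
      rw [ih1 (fun i hi => h i (by simp [vars, hi])),
        ih2 (fun i hi => h i (by simp [vars, hi]))]
  | or φ ψ ih1 ih2 =>
      simp only [eval]
      rw [ih1 (fun i hi => h i (by simp [vars, hi])),
        ih2 (fun i hi => h i (by simp [vars, hi]))]

end PropForm

lemma clIdx_lt {n : ℕ} (c : Cl n) : clIdx c < Fintype.card (Cl n) :=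
  (Fintype.equivFin (Cl n) c).isLt

lemma clIdx_inj {n : ℕ} {c c' : Cl n} (h : clIdx c = clIdx c') : c = c' :=
  (Fintype.equivFin (Cl n)).injective (Fin.val_injective h)

lemma zIdx_eq {n : ℕ} (c : Cl n) : zIdx n c = n + clIdx c := rfl
lemma z'Idx_eq {n : ℕ} (c : Cl n) : z'Idx n c = n + Fintype.card (Cl n) + clIdx c := rfl
lemma yIdx_eq (n : ℕ) : yIdx n = n + 2 * Fintype.card (Cl n) := rfl

lemma zIdx_ne_yIdx {n : ℕ} (c : Cl n) : zIdx n c ≠ yIdx n := by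
  have := clIdx_lt c; rw [zIdx_eq, yIdx_eq]; omega

lemma z'Idx_ne_yIdx {n : ℕ} (c : Cl n) : z'Idx n c ≠ yIdx n := by
  have := clIdx_lt c; rw [z'Idx_eq, yIdx_eq]; omega

lemma zIdx_ne_z'Idx {n : ℕ} (c c' : Cl n) : zIdx n c ≠ z'Idx n c' := by
  have := clIdx_lt c; have := clIdx_lt c'; rw [zIdx_eq, z'Idx_eq]; omega

lemma le_zIdx {n : ℕ} (c : Cl n) : n ≤ zIdx n c := by rw [zIdx_eq]; omega
lemma le_z'Idx {n : ℕ} (c : Cl n) : n ≤ z'Idx n c := by rw [z'Idx_eq]; omega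
lemma le_yIdx (n : ℕ) : n ≤ yIdx n := by rw [yIdx_eq]; omega

lemma zIdx_inj {n : ℕ} {c c' : Cl n} (h : zIdx n c = zIdx n c') : c = c' := by
  rw [zIdx_eq, zIdx_eq] at h; exact clIdx_inj (by omega)

lemma z'Idx_inj {n : ℕ} {c c' : Cl n} (h : z'Idx n c = z'Idx n c') : c = c' := by
  rw [z'Idx_eq, z'Idx_eq] at h; exact clIdx_inj (by omega)

lemma mem_clList {n : ℕ} (c : Cl n) : c ∈ clList n :=
  Finset.mem_toList.mpr (Finset.mem_univ c)

lemma mem_Mphi' {n : ℕ} {cs : List (Cl n)} {i : ℕ} :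
    i ∈ Mphi' cs ↔ i = yIdx n ∨ i < n ∨ (∃ c ∈ cs, zIdx n c = i) ∨
      (∃ c : Cl n, c ∉ cs ∧ z'Idx n c = i) := by
  simp [Mphi', or_assoc]

lemma yIdx_mem_Mphi' {n : ℕ} {cs : List (Cl n)} : yIdx n ∈ Mphi' cs := by
  rw [mem_Mphi']; exact Or.inl rfl

lemma lt_mem_Mphi' {n : ℕ} {cs : List (Cl n)} {i : ℕ} (h : i < n) : i ∈ Mphi' cs := by
  rw [mem_Mphi']; exact Or.inr (Or.inl h)

lemma zIdx_mem_Mphi' {n : ℕ} {cs : List (Cl n)} {c : Cl n} :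
    zIdx n c ∈ Mphi' cs ↔ c ∈ cs := by
  rw [mem_Mphi']
  constructor
  · rintro (h | h | ⟨c', hc', h⟩ | ⟨c', hc', h⟩)
    · exact absurd h (zIdx_ne_yIdx c)
    · exact absurd h (by have := le_zIdx (n := n) c; omega)
    · rwa [zIdx_inj h] at hc'
    · exact absurd h.symm (zIdx_ne_z'Idx c c')
  · intro h; exact Or.inr (Or.inr (Or.inl ⟨c, h, rfl⟩))

lemma z'Idx_mem_Mphi' {n : ℕ} {cs : List (Cl n)} {c : Cl n} :
    z'Idx n c ∈ Mphi' cs ↔ c ∉ cs := by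
  rw [mem_Mphi']
  constructor
  · rintro (h | h | ⟨c', hc', h⟩ | ⟨c', hc', h⟩)
    · exact absurd h (z'Idx_ne_yIdx c)
    · exact absurd h (by have := le_z'Idx (n := n) c; omega)
    · exact absurd h (zIdx_ne_z'Idx c' c)
    · rwa [z'Idx_inj h] at hc'
  · intro h; exact Or.inr (Or.inr (Or.inr ⟨c, h, rfl⟩))

lemma clauseForm_vars {n : ℕ} (c : Cl n) {i : ℕ} (h : i ∈ (clauseForm c).vars) : i < n := by
  rw [clauseForm, PropForm.mem_vars_disj] at h
  obtain ⟨φ, hφ, hi⟩ := h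
  simp only [List.mem_map] at hφ
  obtain ⟨l, -, rfl⟩ := hφ
  obtain ⟨⟨j, hj⟩, b⟩ := l
  cases b <;> simp [litForm, PropForm.vars] at hi <;> omega

lemma psi_eval {n : ℕ} (u : ℕ → Bool) :
    (psi n).eval u = true ↔
      ((u (yIdx n) = false ∧
          ∀ c : Cl n, (clauseForm c).eval u = true ∨ u (zIdx n c) = false) ∨
        (u (yIdx n) = true ∧ ∀ i < n, u i = true)) ∧
      ∀ c : Cl n, u (zIdx n c) = !u (z'Idx n c) := by
  simp only [psi, PropForm.eval, PropForm.eval_conj, PropForm.eval_iff, mem_clList]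
  simp [psi, PropForm.eval, PropForm.eval_conj, PropForm.eval_iff, mem_clList]

lemma Mphi'_subset_vars {n : ℕ} (cs : List (Cl n)) : Mphi' cs ⊆ (psi n).vars := by
  intro i hi
  rw [mem_Mphi'] at hi
  simp only [psi, PropForm.vars, Finset.mem_union]
  rcases hi with rfl | h | ⟨c, hc, rfl⟩ | ⟨c, hc, rfl⟩
  · exact Or.inl (Or.inl (Or.inl (Finset.mem_singleton_self _)))
  · refine Or.inl (Or.inr (Or.inr ?_))
    rw [PropForm.mem_vars_conj]
    exact ⟨.var i, List.mem_map_of_mem (List.mem_range.mpr h), by simp [PropForm.vars]⟩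
  · refine Or.inr ?_
    rw [PropForm.mem_vars_conj]
    exact ⟨_, List.mem_map_of_mem (mem_clList c), by simp [PropForm.iff, PropForm.vars]⟩
  · refine Or.inr ?_
    rw [PropForm.mem_vars_conj]
    exact ⟨_, List.mem_map_of_mem (mem_clList c), by simp [PropForm.iff, PropForm.vars]⟩

/-- A 3CNF formula `φ = c₁ ∧ ⋯ ∧ c_k` with clauses from
`π(n)` is unsatisfiable iff
`M_φ = {y, x₁,…,xₙ} ∪ {z_{c₁},…,z_{c_k}} ∪ {z'_c : c ∉ φ}` is a minimal
model of `ψₙ`. -/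
theorem unsat_iff_min_model_psi (n : ℕ) (cs : List (Cl n)) :
    ¬ (phiForm cs).Satisfiable ↔ (psi n).IsMinModel (Mphi' cs) := by
  have hmodel : (psi n).IsModel (Mphi' cs) := by
    refine ⟨Mphi'_subset_vars cs, ?_⟩
    rw [psi_eval]
    refine ⟨Or.inr ⟨by simp [yIdx_mem_Mphi'], fun i hi => by simp [lt_mem_Mphi' hi]⟩,
      fun c => ?_⟩
    by_cases hc : c ∈ cs <;> simp [zIdx_mem_Mphi', z'Idx_mem_Mphi', hc]
  constructor
  · intro hunsat
    refine ⟨hmodel, fun M hM hMmod => ?_⟩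
    obtain ⟨hMvars, hMeval⟩ := hMmod
    rw [psi_eval] at hMeval
    obtain ⟨hAB, hC⟩ := hMeval
    have hsub : M ⊆ Mphi' cs := (Finset.ssubset_def.mp hM).1
    have hz : ∀ c ∈ cs, zIdx n c ∈ M := by
      intro c hc
      have h1 : z'Idx n c ∉ M := fun h => (z'Idx_mem_Mphi'.mp (hsub h)) hc
      have h2 := hC c
      simpa [h1] using h2
    have hz' : ∀ c : Cl n, c ∉ cs → z'Idx n c ∈ M := by
      intro c hc
      have h1 : zIdx n c ∉ M := fun h => hc (zIdx_mem_Mphi'.mp (hsub h))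
      have h2 := hC c
      simpa [h1] using h2
    rcases hAB with ⟨hy, hcl⟩ | ⟨hy, hx⟩
    · refine absurd ⟨fun i => decide (i ∈ M), ?_⟩ hunsat
      rw [phiForm, PropForm.eval_conj]
      intro φ hφ
      obtain ⟨c, hc, rfl⟩ := List.mem_map.mp hφ
      rcases hcl c with h | h
      · exact h
      · simp [hz c hc] at h
    · refine absurd (fun i hi => ?_) (Finset.ssubset_def.mp hM).2
      rw [mem_Mphi'] at hi
      rcases hi with rfl | h | ⟨c, hc, rfl⟩ | ⟨c, hc, rfl⟩
      · simpa using hy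
      · simpa using hx i h
      · exact hz c hc
      · exact hz' c hc
  · rintro ⟨hmod, hmin⟩ ⟨v, hv⟩
    set M : Finset ℕ := (Finset.range n).filter (fun i => v i = true) ∪
      Finset.image (zIdx n) cs.toFinset ∪
      Finset.image (z'Idx n) (Finset.univ \ cs.toFinset) with hMdef
    have hzM : ∀ c : Cl n, (zIdx n c ∈ M ↔ c ∈ cs) := by
      intro c
      constructor
      · intro h
        rcases Finset.mem_union.mp h with h | h
        · rcases Finset.mem_union.mp h with h | h
          · have h1 := Finset.mem_range.mp (Finset.mem_filter.mp h).1
            have h2 := le_zIdx (n := n) c; omega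
          · obtain ⟨c', hc', he⟩ := Finset.mem_image.mp h
            rw [← zIdx_inj he]
            exact List.mem_toFinset.mp hc'
        · obtain ⟨c', hc', he⟩ := Finset.mem_image.mp h
          exact absurd he (zIdx_ne_z'Idx c c').symm.elim
      · intro h
        exact Finset.mem_union_left _ (Finset.mem_union_right _
          (Finset.mem_image_of_mem _ (List.mem_toFinset.mpr h)))
    have hz'M : ∀ c : Cl n, (z'Idx n c ∈ M ↔ c ∉ cs) := by
      intro c
      constructor
      · intro h
        rcases Finset.mem_union.mp h with h | h
        · rcases Finset.mem_union.mp h with h | h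
          · have h1 := Finset.mem_range.mp (Finset.mem_filter.mp h).1
            have h2 := le_z'Idx (n := n) c; omega
          · obtain ⟨c', hc', he⟩ := Finset.mem_image.mp h
            exact absurd he (zIdx_ne_z'Idx c' c)
        · obtain ⟨c', hc', he⟩ := Finset.mem_image.mp h
          rw [← z'Idx_inj he]
          exact fun hmem => (Finset.mem_sdiff.mp hc').2 (List.mem_toFinset.mpr hmem)
      · intro h
        exact Finset.mem_union_right _ (Finset.mem_image_of_mem _
          (Finset.mem_sdiff.mpr ⟨Finset.mem_univ _,
            fun h' => h (List.mem_toFinset.mp h')⟩))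
    have hxM : ∀ i, i < n → (i ∈ M ↔ v i = true) := by
      intro i hi
      constructor
      · intro h
        rcases Finset.mem_union.mp h with h | h
        · rcases Finset.mem_union.mp h with h | h
          · exact (Finset.mem_filter.mp h).2
          · obtain ⟨c', hc', he⟩ := Finset.mem_image.mp h
            have := le_zIdx (n := n) c'; omega
        · obtain ⟨c', hc', he⟩ := Finset.mem_image.mp h
          have := le_z'Idx (n := n) c'; omega
      · intro h
        exact Finset.mem_union_left _ (Finset.mem_union_left _
          (Finset.mem_filter.mpr ⟨Finset.mem_range.mpr hi, h⟩))
    have hyM : yIdx n ∉ M := by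
      intro h
      rcases Finset.mem_union.mp h with h | h
      · rcases Finset.mem_union.mp h with h | h
        · have h1 := Finset.mem_range.mp (Finset.mem_filter.mp h).1
          have h2 := le_yIdx n; omega
        · obtain ⟨c', hc', he⟩ := Finset.mem_image.mp h
          exact zIdx_ne_yIdx c' he
      · obtain ⟨c', hc', he⟩ := Finset.mem_image.mp h
        exact z'Idx_ne_yIdx c' he
    have hMsub : M ⊆ Mphi' cs := by
      intro i hi
      rw [mem_Mphi']
      rcases Finset.mem_union.mp hi with h | h
      · rcases Finset.mem_union.mp h with h | h
        · exact Or.inr (Or.inl (Finset.mem_range.mp (Finset.mem_filter.mp h).1))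
        · obtain ⟨c', hc', he⟩ := Finset.mem_image.mp h
          exact Or.inr (Or.inr (Or.inl ⟨c', List.mem_toFinset.mp hc', he⟩))
      · obtain ⟨c', hc', he⟩ := Finset.mem_image.mp h
        exact Or.inr (Or.inr (Or.inr ⟨c',
          fun hm => (Finset.mem_sdiff.mp hc').2 (List.mem_toFinset.mpr hm), he⟩))
    have hss : M ⊂ Mphi' cs := by
      rw [Finset.ssubset_def]
      exact ⟨hMsub, fun hsup => hyM (hsup yIdx_mem_Mphi')⟩
    refine hmin M hss ⟨hMsub.trans (Mphi'_subset_vars cs), ?_⟩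
    rw [psi_eval]
    constructor
    · refine Or.inl ⟨by simp [hyM], fun c => ?_⟩
      by_cases hc : c ∈ cs
      · left
        have hagree : ∀ i ∈ (clauseForm c).vars,
            (fun j => decide (j ∈ M)) i = v i := by
          intro i hiv
          have hlt := clauseForm_vars c hiv
          by_cases h : i ∈ M
          · simp [h, (hxM i hlt).mp h]
          · have hvf : v i = false :=
              Bool.eq_false_iff.mpr (fun hvi => h ((hxM i hlt).mpr hvi))
            simp [h, hvf]
        rw [PropForm.eval_congr _ hagree]
        rw [phiForm, PropForm.eval_conj] at hv
        exact hv _ (List.mem_map_of_mem hc)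
      · right; simp [hzM, hc]
    · intro c
      by_cases hc : c ∈ cs <;> simp [hzM, hz'M, hc]
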